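/- For every μ ≠ 0, the function G(α) = Φ(Φ⁻¹(α/2) − μ) + Φ(Φ⁻¹(α/2) + μ) is concave on the interval (0,1). (G(α) is the power at mean μ of the level-α two-sided test of the null hypothesis that a N(θ,1) observation has θ = 0, rejecting when |T| exceeds the two-sided critical value.) -/

import Mathlib

/-- The standard normal cumulative distribution function. -/
noncomputable def Phi (x : ℝ) : ℝ :=
  ∫ t in Set.Iic x, (Real.sqrt (2 * Real.pi))⁻¹ * Real.exp (-t ^ 2 / 2)

/-- The inverse of the standard normal CDF, mapping (0,1) onto ℝ. -/
noncomputable def PhiInv : ℝ → ℝ := Function.invFun Phi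

open Real MeasureTheory Set Filter Topology intervalIntegral

noncomputable def gauss (t : ℝ) : ℝ :=
  (Real.sqrt (2 * Real.pi))⁻¹ * Real.exp (-t ^ 2 / 2)

lemma Phi_eq (x : ℝ) : Phi x = ∫ t in Set.Iic x, gauss t := rfl

lemma sqrt_two_pi_pos : 0 < Real.sqrt (2 * Real.pi) :=
  Real.sqrt_pos.2 (by positivity)

lemma gauss_pos (t : ℝ) : 0 < gauss t := by
  unfold gauss
  positivity

lemma continuous_gauss : Continuous gauss := by
  unfold gauss
  fun_prop

lemma integrable_gauss : Integrable gauss := by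
  have h := (integrable_exp_neg_mul_sq (b := (1:ℝ)/2) (by norm_num)).const_mul
    (Real.sqrt (2 * Real.pi))⁻¹
  refine h.congr (Eventually.of_forall fun t => ?_)
  unfold gauss
  ring_nf

lemma integral_gauss : ∫ t, gauss t = 1 := by
  have h : ∫ t : ℝ, Real.exp (-(1/2) * t ^ 2) = Real.sqrt (Real.pi / (1/2)) :=
    integral_gaussian (1/2 : ℝ)
  have h2 : ∫ t : ℝ, Real.exp (-t ^ 2 / 2) = Real.sqrt (2 * Real.pi) := by
    rw [show (fun t : ℝ => Real.exp (-t ^ 2 / 2)) = fun t : ℝ => Real.exp (-(1/2) * t ^ 2) by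
      funext t; ring_nf, h]
    norm_num [mul_comm]
  unfold gauss
  rw [MeasureTheory.integral_const_mul, h2, inv_mul_cancel₀ sqrt_two_pi_pos.ne']

lemma hasDerivAt_Phi (x : ℝ) : HasDerivAt Phi (gauss x) x := by
  have h1 : HasDerivAt (fun u => ∫ t in (0:ℝ)..u, gauss t) (gauss x) x :=
    intervalIntegral.integral_hasDerivAt_right
      integrable_gauss.intervalIntegrable
      (continuous_gauss.stronglyMeasurableAtFilter _ _)
      continuous_gauss.continuousAt
  have h2 : Phi = fun u => (∫ t in (0:ℝ)..u, gauss t) + Phi 0 := by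
    funext u
    have := intervalIntegral.integral_Iic_sub_Iic (μ := volume)
      integrable_gauss.integrableOn integrable_gauss.integrableOn (a := 0) (b := u)
    rw [Phi_eq, Phi_eq]
    linarith
  rw [h2]
  exact h1.add_const _

lemma continuous_Phi : Continuous Phi :=
  continuous_iff_continuousAt.2 fun x => (hasDerivAt_Phi x).continuousAt

lemma Phi_strictMono : StrictMono Phi :=
  strictMono_of_deriv_pos fun x => by
    rw [(hasDerivAt_Phi x).deriv]; exact gauss_pos x

lemma integral_gauss_pos {s : Set ℝ} (hs : MeasurableSet s) (hμ : volume s ≠ 0) :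
    0 < ∫ t in s, gauss t := by
  rw [setIntegral_pos_iff_support_of_nonneg_ae
    (Eventually.of_forall fun t => (gauss_pos t).le) integrable_gauss.integrableOn]
  have : Function.support gauss = Set.univ := by
    ext t; simp [Function.mem_support, (gauss_pos t).ne']
  rw [this, Set.univ_inter]
  exact hμ.bot_lt

lemma Phi_pos (x : ℝ) : 0 < Phi x := by
  rw [Phi_eq]
  refine integral_gauss_pos measurableSet_Iic ?_
  simp [Real.volume_Iic]

lemma Phi_lt_one (x : ℝ) : Phi x < 1 := by
  have hsplit : Phi x + ∫ t in Set.Ioi x, gauss t = 1 := by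
    rw [Phi_eq, integral_Iic_add_Ioi integrable_gauss.integrableOn
      integrable_gauss.integrableOn, integral_gauss]
  have hpos : 0 < ∫ t in Set.Ioi x, gauss t := by
    refine integral_gauss_pos measurableSet_Ioi ?_
    simp [Real.volume_Ioi]
  linarith

lemma gauss_neg (t : ℝ) : gauss (-t) = gauss t := by
  unfold gauss; ring_nf

lemma Phi_zero : Phi 0 = 1 / 2 := by
  have hsym : ∫ t in Set.Ioi (0:ℝ), gauss t = Phi 0 := by
    have h := integral_comp_neg_Ioi (0:ℝ) gauss
    simp only [gauss_neg, neg_zero] at h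
    rw [Phi_eq, ← h]
  have hsplit : Phi 0 + ∫ t in Set.Ioi (0:ℝ), gauss t = 1 := by
    rw [Phi_eq, integral_Iic_add_Ioi integrable_gauss.integrableOn
      integrable_gauss.integrableOn, integral_gauss]
  linarith

lemma tendsto_Phi_atTop : Tendsto Phi atTop (𝓝 1) := by
  have h1 : Tendsto (fun x : ℝ => ∫ t in (0:ℝ)..x, gauss t) atTop
      (𝓝 (∫ t in Set.Ioi (0:ℝ), gauss t)) :=
    intervalIntegral_tendsto_integral_Ioi 0 integrable_gauss.integrableOn tendsto_id
  have h2 : Phi = fun u => (∫ t in (0:ℝ)..u, gauss t) + Phi 0 := by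
    funext u
    have := intervalIntegral.integral_Iic_sub_Iic (μ := volume)
      integrable_gauss.integrableOn integrable_gauss.integrableOn (a := 0) (b := u)
    rw [Phi_eq, Phi_eq]; linarith
  have hsplit : Phi 0 + ∫ t in Set.Ioi (0:ℝ), gauss t = 1 := by
    rw [Phi_eq, integral_Iic_add_Ioi integrable_gauss.integrableOn
      integrable_gauss.integrableOn, integral_gauss]
  rw [h2]
  have := h1.add_const (Phi 0)
  rwa [show (∫ t in Set.Ioi (0:ℝ), gauss t) + Phi 0 = 1 by linarith] at this

lemma tendsto_Phi_atBot : Tendsto Phi atBot (𝓝 0) := by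
  have h1 : Tendsto (fun x : ℝ => ∫ t in x..(0:ℝ), gauss t) atBot
      (𝓝 (∫ t in Set.Iic (0:ℝ), gauss t)) :=
    intervalIntegral_tendsto_integral_Iic 0 integrable_gauss.integrableOn tendsto_id
  have h2 : Phi = fun u => Phi 0 - ∫ t in u..(0:ℝ), gauss t := by
    funext u
    have := intervalIntegral.integral_Iic_sub_Iic (μ := volume)
      integrable_gauss.integrableOn integrable_gauss.integrableOn (a := u) (b := 0)
    rw [Phi_eq, Phi_eq]; linarith
  rw [h2]
  have := (tendsto_const_nhds (x := Phi 0) (f := atBot (α := ℝ))).sub h1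
  rwa [show Phi 0 - ∫ t in Set.Iic (0:ℝ), gauss t = 0 by rw [← Phi_eq]; ring] at this

lemma exists_Phi_eq {y : ℝ} (hy : y ∈ Set.Ioo (0:ℝ) 1) : ∃ x, Phi x = y := by
  obtain ⟨a, ha⟩ := (tendsto_Phi_atBot.eventually_lt_const hy.1).exists
  obtain ⟨b, hb⟩ := (tendsto_Phi_atTop.eventually_const_lt hy.2).exists
  have hab : a ≤ b := (Phi_strictMono.lt_iff_lt.1 (ha.trans hb)).le
  have := intermediate_value_Icc hab continuous_Phi.continuousOn
  obtain ⟨x, _, hx⟩ := this ⟨ha.le, hb.le⟩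
  exact ⟨x, hx⟩

lemma Phi_PhiInv {y : ℝ} (hy : y ∈ Set.Ioo (0:ℝ) 1) : Phi (PhiInv y) = y :=
  Function.invFun_eq (exists_Phi_eq hy)

lemma continuousAt_PhiInv {y : ℝ} (hy : y ∈ Set.Ioo (0:ℝ) 1) :
    ContinuousAt PhiInv y := by
  rw [ContinuousAt, tendsto_order]
  constructor
  · intro a ha
    have h1 : Phi a < y := by
      rw [← Phi_PhiInv hy]; exact Phi_strictMono ha
    have hmem : Set.Ioo (Phi a) 1 ∈ 𝓝 y := Ioo_mem_nhds h1 hy.2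
    filter_upwards [hmem] with x hx
    have hx01 : x ∈ Set.Ioo (0:ℝ) 1 := ⟨(Phi_pos a).trans hx.1, hx.2⟩
    have : Phi a < Phi (PhiInv x) := by rw [Phi_PhiInv hx01]; exact hx.1
    exact Phi_strictMono.lt_iff_lt.1 this
  · intro b hb
    have h1 : y < Phi b := by
      rw [← Phi_PhiInv hy]; exact Phi_strictMono hb
    have hmem : Set.Ioo (0:ℝ) (Phi b) ∈ 𝓝 y := Ioo_mem_nhds hy.1 h1
    filter_upwards [hmem] with x hx
    have hx01 : x ∈ Set.Ioo (0:ℝ) 1 := ⟨hx.1, hx.2.trans (Phi_lt_one b)⟩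
    have : Phi (PhiInv x) < Phi b := by rw [Phi_PhiInv hx01]; exact hx.2
    exact Phi_strictMono.lt_iff_lt.1 this

lemma hasDerivAt_PhiInv {y : ℝ} (hy : y ∈ Set.Ioo (0:ℝ) 1) :
    HasDerivAt PhiInv (gauss (PhiInv y))⁻¹ y := by
  refine HasDerivAt.of_local_left_inverse (continuousAt_PhiInv hy)
    (hasDerivAt_Phi _) (gauss_pos _).ne' ?_
  filter_upwards [isOpen_Ioo.mem_nhds hy] with x hx
  exact Phi_PhiInv hx

lemma PhiInv_neg {y : ℝ} (hy : y ∈ Set.Ioo (0:ℝ) (1/2)) : PhiInv y < 0 := by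
  have hy01 : y ∈ Set.Ioo (0:ℝ) 1 := ⟨hy.1, hy.2.trans (by norm_num)⟩
  have : Phi (PhiInv y) < Phi 0 := by
    rw [Phi_PhiInv hy01, Phi_zero]; exact hy.2
  exact Phi_strictMono.lt_iff_lt.1 this

lemma hasDerivAt_G (μ : ℝ) {α : ℝ} (hα : α ∈ Set.Ioo (0:ℝ) 1) :
    HasDerivAt (fun α => Phi (PhiInv (α / 2) - μ) + Phi (PhiInv (α / 2) + μ))
      (Real.exp (-μ ^ 2 / 2) * Real.cosh (μ * PhiInv (α / 2))) α := by
  have hα2 : α / 2 ∈ Set.Ioo (0:ℝ) 1 := ⟨by linarith [hα.1], by linarith [hα.2]⟩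
  set c := PhiInv (α / 2) with hc
  have hdiv : HasDerivAt (fun a : ℝ => a / 2) (1 / 2) α := by
    simpa using (hasDerivAt_id α).div_const 2
  have hcder : HasDerivAt (fun a : ℝ => PhiInv (a / 2)) ((gauss c)⁻¹ * (1 / 2)) α :=
    (hasDerivAt_PhiInv hα2).comp α hdiv
  have h1 : HasDerivAt (fun a : ℝ => Phi (PhiInv (a / 2) - μ))
      (gauss (c - μ) * ((gauss c)⁻¹ * (1 / 2))) α :=
    by have := (hasDerivAt_Phi (c - μ)).comp α (hcder.sub_const μ); exact this
  have h2 : HasDerivAt (fun a : ℝ => Phi (PhiInv (a / 2) + μ))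
      (gauss (c + μ) * ((gauss c)⁻¹ * (1 / 2))) α :=
    by have := (hasDerivAt_Phi (c + μ)).comp α (hcder.add_const μ); exact this
  have h := h1.add h2
  refine h.congr_deriv ?_
  have e1 : Real.exp (-(c - μ) ^ 2 / 2) = Real.exp (μ * c - μ ^ 2 / 2) * Real.exp (-c ^ 2 / 2) := by
    rw [← Real.exp_add]; ring_nf
  have e2 : Real.exp (-(c + μ) ^ 2 / 2) = Real.exp (-(μ * c) - μ ^ 2 / 2) * Real.exp (-c ^ 2 / 2) := by
    rw [← Real.exp_add]; ring_nf
  have e3 : Real.exp (μ * c - μ ^ 2 / 2) = Real.exp (μ * c) * Real.exp (-μ ^ 2 / 2) := by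
    rw [← Real.exp_add]; ring_nf
  have e4 : Real.exp (-(μ * c) - μ ^ 2 / 2) = Real.exp (-(μ * c)) * Real.exp (-μ ^ 2 / 2) := by
    rw [← Real.exp_add]; ring_nf
  unfold gauss
  rw [Real.cosh_eq, e1, e2, e3, e4]
  have hK : Real.sqrt (2 * Real.pi) ≠ 0 := sqrt_two_pi_pos.ne'
  have hE : Real.exp (-c ^ 2 / 2) ≠ 0 := Real.exp_ne_zero _
  field_simp

/-- For every `μ ≠ 0`, the power function `G(α) = Φ(Φ⁻¹(α/2) − μ) + Φ(Φ⁻¹(α/2) + μ)`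
of the level-α two-sided Gaussian test is concave on `(0,1)`. -/
theorem stmt_4 (μ : ℝ) (hμ : μ ≠ 0) :
    ConcaveOn ℝ (Set.Ioo (0 : ℝ) 1)
      (fun α => Phi (PhiInv (α / 2) - μ) + Phi (PhiInv (α / 2) + μ)) := by
  have hint : interior (Set.Ioo (0:ℝ) 1) = Set.Ioo (0:ℝ) 1 := isOpen_Ioo.interior_eq
  refine AntitoneOn.concaveOn_of_deriv (convex_Ioo 0 1) ?_ ?_ ?_
  · intro α hα
    exact (hasDerivAt_G μ hα).continuousAt.continuousWithinAt
  · rw [hint]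
    intro α hα
    exact (hasDerivAt_G μ hα).differentiableAt.differentiableWithinAt
  · rw [hint]
    intro a ha b hb hab
    rw [(hasDerivAt_G μ ha).deriv, (hasDerivAt_G μ hb).deriv]
    have ha2 : a / 2 ∈ Set.Ioo (0:ℝ) (1/2) := ⟨by linarith [ha.1], by linarith [ha.2]⟩
    have hb2 : b / 2 ∈ Set.Ioo (0:ℝ) (1/2) := ⟨by linarith [hb.1], by linarith [hb.2]⟩
    have ha01 : a / 2 ∈ Set.Ioo (0:ℝ) 1 := ⟨ha2.1, ha2.2.trans (by norm_num)⟩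
    have hb01 : b / 2 ∈ Set.Ioo (0:ℝ) 1 := ⟨hb2.1, hb2.2.trans (by norm_num)⟩
    set ca := PhiInv (a / 2)
    set cb := PhiInv (b / 2)
    have hcab : ca ≤ cb := by
      have : Phi ca ≤ Phi cb := by
        rw [Phi_PhiInv ha01, Phi_PhiInv hb01]; linarith
      exact Phi_strictMono.le_iff_le.1 this
    have hcb : cb < 0 := PhiInv_neg hb2
    have habs : |μ * cb| ≤ |μ * ca| := by
      rw [abs_mul, abs_mul]
      refine mul_le_mul_of_nonneg_left ?_ (abs_nonneg μ)
      rw [abs_of_nonpos hcb.le, abs_of_nonpos (hcab.trans hcb.le)]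
      linarith
    have := Real.cosh_le_cosh.2 habs
    exact mul_le_mul_of_nonneg_left this (Real.exp_nonneg _)
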